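/- If 0 ≤ l < l' and μ{ ω : c + l·S(ω) < 0 } > 0, then g(l) < g(l'); that is, the option-value function is strictly increasing past any scale at which the kink is reached with positive probability. -/

import Mathlib

open MeasureTheory

lemma max_sum_eq_aux (c a : ℝ) : max (c+a) 0 + max (c-a) 0 = c + max |c| |a| := by
  rcases abs_cases c with ⟨e1,f1⟩|⟨e1,f1⟩ <;> rcases abs_cases a with ⟨e2,f2⟩|⟨e2,f2⟩ <;>
  rw [e1, e2] <;> simp only [max_def] <;> split_ifs <;> linarith

/-- Strict monotonicity of the option-value function past any scale at which
the kink is reached with positive probability (used in Proposition 3.3). -/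
theorem option_value_strictMono
    {Ω : Type*} [MeasurableSpace Ω] (μ : Measure Ω) [IsProbabilityMeasure μ]
    (S : Ω → ℝ) (hS : Integrable S μ)
    (hsym : Measure.map S μ = Measure.map (fun ω => -S ω) μ)
    (c : ℝ) (hc : 0 ≤ c) (g : ℝ → ℝ)
    (hg : ∀ l, g l = ∫ ω, max (c + l * S ω) 0 ∂μ) :
    ∀ l l' : ℝ, 0 ≤ l → l < l' →
      0 < μ {ω | c + l * S ω < 0} → g l < g l' := by
  intro l l' hl hll' hμA
  -- l > 0
  have hlpos : 0 < l := by
    rcases hl.lt_or_eq with h | h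
    · exact h
    · exfalso
      have : {ω | c + l * S ω < 0} = ∅ := by
        ext ω; simp only [Set.mem_setOf_eq, Set.mem_empty_iff_false, iff_false, not_lt]
        rw [← h]; simpa using hc
      rw [this] at hμA; simp at hμA
  -- symmetry
  have hmeas : ∀ m : ℝ, Continuous (fun x : ℝ => max (c + m * x) 0) := by
    intro m; fun_prop
  have hsymm : ∀ m : ℝ, ∫ ω, max (c + m * S ω) 0 ∂μ = ∫ ω, max (c - m * S ω) 0 ∂μ := by
    intro m
    have h1 : ∫ ω, max (c + m * S ω) 0 ∂μ
        = ∫ x, max (c + m * x) 0 ∂(Measure.map S μ) :=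
      (integral_map hS.aemeasurable (hmeas m).aestronglyMeasurable).symm
    rw [h1, hsym, integral_map (φ := fun ω => -S ω) hS.aemeasurable.neg (hmeas m).aestronglyMeasurable]
    simp [sub_eq_add_neg, mul_comm]
  have hint : ∀ m : ℝ, Integrable (fun ω => max (c + m * S ω) 0) μ := by
    intro m
    exact (((integrable_const c).add (hS.const_mul m))).pos_part
  have hint' : ∀ m : ℝ, Integrable (fun ω => max (c - m * S ω) 0) μ := by
    intro m
    have : Integrable (fun ω => c - m * S ω) μ := (integrable_const c).sub (hS.const_mul m)
    exact this.pos_part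
  -- u
  set u : ℝ → Ω → ℝ := fun m ω => max (c + m * S ω) 0 + max (c - m * S ω) 0 with hu
  have hintu : ∀ m, Integrable (u m) μ := fun m => (hint m).add (hint' m)
  have h2g : ∀ m, 2 * g m = ∫ ω, u m ω ∂μ := by
    intro m
    rw [hg m, two_mul, integral_add (hint m) (hint' m)]
    rw [hsymm m]
  -- closed form
  have hform : ∀ m ω, u m ω = c + max |c| (|m| * |S ω|) := by
    intro m ω
    rw [hu]; simp only
    rw [max_sum_eq_aux c (m * S ω), abs_mul]
  -- nonneg diff
  have hnn : ∀ ω, 0 ≤ u l' ω - u l ω := by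
    intro ω
    rw [hform, hform]
    have : |l| * |S ω| ≤ |l'| * |S ω| := by
      apply mul_le_mul_of_nonneg_right _ (abs_nonneg _)
      rw [abs_of_nonneg hl, abs_of_nonneg (hl.trans hll'.le)]
      exact hll'.le
    have := max_le_max (le_refl |c|) this
    linarith
  -- positive on A
  have hsub : {ω | c + l * S ω < 0} ⊆ Function.support (fun ω => u l' ω - u l ω) := by
    intro ω hω
    simp only [Set.mem_setOf_eq] at hω
    simp only [Function.mem_support]
    have hSneg : S ω < 0 := by nlinarith
    have h1 : c + l * S ω < 0 := hω
    have h2 : c + l' * S ω < 0 := by nlinarith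
    have h3 : 0 ≤ c - l * S ω := by nlinarith
    have h4 : 0 ≤ c - l' * S ω := by nlinarith
    rw [hu]; simp only
    rw [max_eq_right h1.le, max_eq_right h2.le, max_eq_left h3, max_eq_left h4]
    intro h; nlinarith
  have hpos : 0 < ∫ ω, (u l' ω - u l ω) ∂μ := by
    rw [integral_pos_iff_support_of_nonneg_ae
      (Filter.Eventually.of_forall hnn) ((hintu l').sub (hintu l))]
    exact lt_of_lt_of_le hμA (measure_mono hsub)
  rw [integral_sub (hintu l') (hintu l)] at hpos
  rw [← h2g, ← h2g] at hpos
  linarith
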